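/- The cone K_L = {x ∈ ℝⁿ : ⟪x,r⟫ ≥ (√(n−1)/√n)‖x‖} is contained in the Pareto cone ℝⁿ₊, and the orthogonal projections of r onto the coordinate hyperplanes {x_i = 0} lie on the boundary of K_L (the cosine of the angle between r and each such projection equals √(n−1)/√n). -/

import Mathlib

private theorem sumite (n : ℕ) (hn : 1 ≤ n) (i : Fin n) (c : ℝ) :
    ∑ j, (if j = i then (0:ℝ) else c) = (n - 1) * c := by
  rw [Finset.sum_ite, Finset.sum_const, Finset.sum_const, Finset.filter_eq', Finset.filter_ne',
    if_pos (Finset.mem_univ i), Finset.card_erase_of_mem (Finset.mem_univ i),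
    Finset.card_univ, Fintype.card_fin, nsmul_eq_mul, nsmul_eq_mul, Nat.cast_sub hn]
  push_cast; ring

theorem stmt8 (n : ℕ) (hn : 2 ≤ n) :
    let r : EuclideanSpace ℝ (Fin n) := WithLp.toLp 2 (fun _ => 1 / Real.sqrt n)
    {x : EuclideanSpace ℝ (Fin n) | (Real.sqrt (n - 1) / Real.sqrt n) * ‖x‖ ≤ inner ℝ x r}
        ⊆ {x : EuclideanSpace ℝ (Fin n) | ∀ i, 0 ≤ x i} ∧
      ∀ i : Fin n,
        let p : EuclideanSpace ℝ (Fin n) := WithLp.toLp 2 (fun j => if j = i then 0 else 1 / Real.sqrt n)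
        (inner ℝ p r : ℝ) = (Real.sqrt (n - 1) / Real.sqrt n) * ‖p‖ := by
  intro r
  have hn2 : (2:ℝ) ≤ (n:ℝ) := by exact_mod_cast hn
  have hn0 : (0:ℝ) < n := by linarith
  have hn1 : (0:ℝ) ≤ (n:ℝ) - 1 := by linarith
  have hsn : 0 < Real.sqrt n := Real.sqrt_pos.mpr hn0
  have hsq1 : Real.sqrt ((n:ℝ)-1) ^ 2 = (n:ℝ)-1 := Real.sq_sqrt hn1
  have hsqn : Real.sqrt (n:ℝ) ^ 2 = (n:ℝ) := Real.sq_sqrt hn0.le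
  constructor
  · intro x hx i
    simp only [Set.mem_setOf_eq] at hx ⊢
    have hinner : (inner ℝ x r : ℝ) = (∑ j, x j) / Real.sqrt n := by
      have : (inner ℝ x r : ℝ) = ∑ j, x j * (1 / Real.sqrt n) := by
        simp only [r, PiLp.inner_apply, RCLike.inner_apply, conj_trivial]
        exact Finset.sum_congr rfl (fun j _ => by ring)
      rw [this, Finset.sum_div]
      simp [mul_one_div, div_eq_mul_inv]
    set s := ∑ j, x j with hs
    have hx' : Real.sqrt ((n:ℝ)-1) * ‖x‖ ≤ s := by
      rw [hinner, div_mul_eq_mul_div] at hx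
      exact (div_le_div_iff_of_pos_right hsn).mp hx
    have hnorm : ‖x‖^2 = ∑ j, x j ^ 2 := by
      rw [EuclideanSpace.norm_eq, Real.sq_sqrt (by positivity)]
      simp [sq_abs]
    by_contra hxi
    push_neg at hxi
    have hCS : (∑ j ∈ Finset.univ.erase i, x j)^2 ≤
        ((Finset.univ.erase i).card : ℝ) * ∑ j ∈ Finset.univ.erase i, x j ^ 2 :=
      sq_sum_le_card_mul_sum_sq
    have hcard : ((Finset.univ.erase i).card : ℝ) = (n:ℝ) - 1 := by
      rw [Finset.card_erase_of_mem (Finset.mem_univ i), Finset.card_univ, Fintype.card_fin,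
        Nat.cast_sub (by omega)]
      simp
    have h1 : ∑ j ∈ Finset.univ.erase i, x j = s - x i :=
      Finset.sum_erase_eq_sub (Finset.mem_univ i)
    have h2 : ∑ j ∈ Finset.univ.erase i, x j ^ 2 = ‖x‖^2 - x i ^ 2 := by
      rw [hnorm]; exact Finset.sum_erase_eq_sub (Finset.mem_univ i)
    rw [hcard, h1, h2] at hCS
    have hs0 : 0 ≤ s := le_trans (by positivity) hx'
    have hss : (Real.sqrt ((n:ℝ)-1) * ‖x‖) * (Real.sqrt ((n:ℝ)-1) * ‖x‖) ≤ s * s :=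
      mul_self_le_mul_self (by positivity) hx'
    nlinarith [mul_nonneg hs0 (neg_nonneg.mpr hxi.le), mul_pos_of_neg_of_neg hxi hxi,
      sq_nonneg (x i), norm_nonneg x]
  · intro i p
    have hi : (inner ℝ p r : ℝ) = ((n:ℝ) - 1) * (1 / Real.sqrt n * (1 / Real.sqrt n)) := by
      have : (inner ℝ p r : ℝ) = ∑ j, (if j = i then (0:ℝ) else 1 / Real.sqrt n) * (1 / Real.sqrt n) := by
        simp only [r, p, PiLp.inner_apply, RCLike.inner_apply, conj_trivial]
        exact Finset.sum_congr rfl (fun j _ => by ring)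
      rw [this]
      simp only [ite_mul, zero_mul]
      exact sumite n (by omega) i _
    have hp : ‖p‖ = Real.sqrt ((n:ℝ)-1) / Real.sqrt n := by
      rw [EuclideanSpace.norm_eq]
      have : ∀ j, ‖p j‖^2 = if j = i then (0:ℝ) else 1 / n := by
        intro j
        simp only [p]
        split
        · simp
        · rw [Real.norm_eq_abs, sq_abs, div_pow, one_pow, hsqn]
      simp only [this]
      rw [sumite n (by omega) i, Real.sqrt_mul hn1, one_div, Real.sqrt_inv, ← one_div,
        mul_one_div]
    have h1 : Real.sqrt ((n:ℝ)-1) * Real.sqrt ((n:ℝ)-1) = (n:ℝ)-1 := by nlinarith [hsq1]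
    have h2 : Real.sqrt (n:ℝ) * Real.sqrt (n:ℝ) = (n:ℝ) := by nlinarith [hsqn]
    have hr : Real.sqrt ((n:ℝ)-1) / Real.sqrt n * (Real.sqrt ((n:ℝ)-1) / Real.sqrt n)
        = ((n:ℝ)-1) / n := by rw [div_mul_div_comm, h1, h2]
    rw [hi, hp, hr]
    field_simp
    rw [hsqn]; ring
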